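/- For every position i with 0 ≤ i < n−1: S_i has type A if and only if S_{i+1} is lexicographically smaller than S_i, and S_i has type B if and only if S_i is lexicographically smaller than S_{i+1}. -/

import Mathlib

/-- The suffix `S_i = T[i..n)` of the text `T` of length `n`, as a list. -/
def suff {α : Type*} (T : ℕ → α) (n i : ℕ) : List α :=
  (List.range (n - i)).map (fun t => T (i + t))

/-- `S_i` has type B: there is a `k ≥ i` with `T[k] < T[k+1]` and
`T[m] = T[m+1]` for all `i ≤ m < k`. -/
def TypeB {α : Type*} [LinearOrder α] (T : ℕ → α) (n i : ℕ) : Prop :=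
  ∃ k, i ≤ k ∧ k + 1 < n ∧ T k < T (k + 1) ∧ ∀ m, i ≤ m → m < k → T m = T (m + 1)

/-- `S_i` has type A: either there is a `k ≥ i` with `T[k] > T[k+1]` and
`T[m] = T[m+1]` for all `i ≤ m < k`, or all characters from position `i`
to the end are equal (the type propagates from `S_{n-1}`). -/
def TypeA {α : Type*} [LinearOrder α] (T : ℕ → α) (n i : ℕ) : Prop :=
  (∃ k, i ≤ k ∧ k + 1 < n ∧ T (k + 1) < T k ∧ ∀ m, i ≤ m → m < k → T m = T (m + 1))
  ∨ (∀ m, i ≤ m → m + 1 < n → T m = T (m + 1))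

/-- `S_i` is a B*-suffix: `S_i` has type B and `S_{i+1}` has type A. -/
def TypeBStar {α : Type*} [LinearOrder α] (T : ℕ → α) (n i : ℕ) : Prop :=
  TypeB T n i ∧ TypeA T n (i + 1)

/-- `lcp T n i j` is the largest `s ≥ 0` with `i + s ≤ n`, `j + s ≤ n` and
`T[i+t] = T[j+t]` for all `t < s`. -/
noncomputable def lcp {α : Type*} (T : ℕ → α) (n i j : ℕ) : ℕ :=
  sSup {s | i + s ≤ n ∧ j + s ≤ n ∧ ∀ t, t < s → T (i + t) = T (j + t)}

lemma suff_cons {α : Type*} (T : ℕ → α) (n i : ℕ) (h : i < n) :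
    suff T n i = T i :: suff T n (i + 1) := by
  have h1 : n - i = (n - (i+1)) + 1 := by omega
  simp only [suff, h1, List.range_succ_eq_map, List.map_cons, List.map_map]
  congr 1
  · simp
    intro t _
    congr 1
    omega

lemma suff_nil {α : Type*} (T : ℕ → α) (n : ℕ) : suff T n n = [] := by
  simp [suff]

lemma lex_cons_cases {α : Type*} [LinearOrder α] {a b : α} {l1 l2 : List α}
    (h : List.Lex (· < ·) (a :: l1) (b :: l2)) :
    a < b ∨ (a = b ∧ List.Lex (· < ·) l1 l2) := by
  cases h with
  | cons h' => exact Or.inr ⟨rfl, h'⟩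
  | rel h' => exact Or.inl h'

lemma typeA_shift {α : Type*} [LinearOrder α] {T : ℕ → α} {n i : ℕ}
    (h : T i = T (i + 1)) : TypeA T n i ↔ TypeA T n (i + 1) := by
  constructor
  · rintro (⟨k, hk1, hk2, hk3, hk4⟩ | hall)
    · rcases eq_or_lt_of_le hk1 with rfl | hk
      · exact absurd h (ne_of_gt hk3)
      · exact Or.inl ⟨k, hk, hk2, hk3, fun m hm hm' => hk4 m (by omega) hm'⟩
    · exact Or.inr fun m hm hm' => hall m (by omega) hm'
  · rintro (⟨k, hk1, hk2, hk3, hk4⟩ | hall)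
    · refine Or.inl ⟨k, by omega, hk2, hk3, fun m hm hm' => ?_⟩
      rcases eq_or_lt_of_le hm with rfl | hm2
      · exact h
      · exact hk4 m (by omega) hm'
    · refine Or.inr fun m hm hm' => ?_
      rcases eq_or_lt_of_le hm with rfl | hm2
      · exact h
      · exact hall m (by omega) hm'

lemma typeB_shift {α : Type*} [LinearOrder α] {T : ℕ → α} {n i : ℕ}
    (h : T i = T (i + 1)) : TypeB T n i ↔ TypeB T n (i + 1) := by
  constructor
  · rintro ⟨k, hk1, hk2, hk3, hk4⟩
    rcases eq_or_lt_of_le hk1 with rfl | hk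
    · exact absurd h (ne_of_lt hk3)
    · exact ⟨k, hk, hk2, hk3, fun m hm hm' => hk4 m (by omega) hm'⟩
  · rintro ⟨k, hk1, hk2, hk3, hk4⟩
    refine ⟨k, by omega, hk2, hk3, fun m hm hm' => ?_⟩
    rcases eq_or_lt_of_le hm with rfl | hm2
    · exact h
    · exact hk4 m (by omega) hm'


/-- For `0 ≤ i < n - 1`: `S_i` has type A iff `S_{i+1} < S_i`, and
`S_i` has type B iff `S_i < S_{i+1}` (lexicographically). -/
theorem stmt_3 {α : Type*} [LinearOrder α] (T : ℕ → α) (n : ℕ) (hn : 1 ≤ n)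
    (i : ℕ) (hi : i < n - 1) :
    (TypeA T n i ↔ List.Lex (· < ·) (suff T n (i + 1)) (suff T n i)) ∧
    (TypeB T n i ↔ List.Lex (· < ·) (suff T n i) (suff T n (i + 1))) := by
  have hin : i < n := by omega
  have hin1 : i + 1 < n := by omega
  have e0 : suff T n i = T i :: suff T n (i + 1) := suff_cons T n i hin
  have e1 : suff T n (i + 1) = T (i + 1) :: suff T n (i + 2) := suff_cons T n (i + 1) hin1
  rcases lt_trichotomy (T i) (T (i + 1)) with hlt | heq | hgt
  · -- type B, S_i < S_{i+1}
    constructor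
    · constructor
      · rintro (⟨k, hk1, hk2, hk3, hk4⟩ | hall)
        · rcases eq_or_lt_of_le hk1 with rfl | hk
          · exact absurd hlt (not_lt.2 hk3.le)
          · exact absurd (hk4 i le_rfl hk) (ne_of_lt hlt)
        · exact absurd (hall i le_rfl hin1) (ne_of_lt hlt)
      · intro h
        rw [e0, e1] at h
        rcases lex_cons_cases h with h' | ⟨h', _⟩
        · exact absurd h' (not_lt.2 hlt.le)
        · exact absurd h'.symm (ne_of_lt hlt)
    · constructor
      · intro _
        rw [e0, e1]
        exact List.Lex.rel hlt
      · intro _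
        exact ⟨i, le_rfl, hin1, hlt, fun m hm hm' => by omega⟩
  · -- equal heads
    by_cases h2 : i + 1 < n - 1
    · obtain ⟨ihA, ihB⟩ := stmt_3 T n hn (i + 1) h2
      have e0' : suff T n i = T (i + 1) :: suff T n (i + 1) := by rw [e0, heq]
      have lx1 : List.Lex (· < ·) (suff T n (i + 1)) (suff T n i) ↔
          List.Lex (· < ·) (suff T n (i + 2)) (suff T n (i + 1)) := by
        rw [e0', e1]
        exact List.lex_cons_iff
      have lx2 : List.Lex (· < ·) (suff T n i) (suff T n (i + 1)) ↔
          List.Lex (· < ·) (suff T n (i + 1)) (suff T n (i + 2)) := by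
        rw [e0', e1]
        exact List.lex_cons_iff
      exact ⟨(typeA_shift heq).trans (ihA.trans lx1.symm),
             (typeB_shift heq).trans (ihB.trans lx2.symm)⟩
    · -- i + 1 = n - 1
      have hi2 : i + 2 = n := by omega
      have e2 : suff T n (i + 2) = [] := by rw [hi2]; exact suff_nil T n
      constructor
      · constructor
        · intro _
          rw [e0, e1, heq, e2]
          exact List.Lex.cons List.Lex.nil
        · intro _
          refine Or.inr fun m hm hm' => ?_
          have : m = i := by omega
          subst this
          exact heq
      · constructor
        · rintro ⟨k, hk1, hk2, hk3, hk4⟩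
          have : k = i := by omega
          subst this
          exact absurd heq (ne_of_lt hk3)
        · intro h
          rw [e0, e1, heq, e2] at h
          rcases lex_cons_cases h with h' | ⟨_, h'⟩
          · exact absurd h' (lt_irrefl _)
          · exact (List.not_lex_nil h').elim
  · -- type A, S_{i+1} < S_i
    constructor
    · constructor
      · intro _
        rw [e0, e1]
        exact List.Lex.rel hgt
      · intro _
        exact Or.inl ⟨i, le_rfl, hin1, hgt, fun m hm hm' => by omega⟩
    · constructor
      · rintro ⟨k, hk1, hk2, hk3, hk4⟩
        rcases eq_or_lt_of_le hk1 with rfl | hk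
        · exact absurd hgt (not_lt.2 hk3.le)
        · exact absurd (hk4 i le_rfl hk) (ne_of_gt hgt)
      · intro h
        rw [e0, e1] at h
        rcases lex_cons_cases h with h' | ⟨h', _⟩
        · exact absurd h' (not_lt.2 hgt.le)
        · exact absurd h' (ne_of_gt hgt)
  termination_by n - i
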